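/- Let n ≥ 1 and let h : (Fin n → ℝ) → (Fin n → ℝ) be continuously differentiable (C¹) such that at every point s the derivative fderiv ℝ h s is an invertible linear map, and for every point s, every k ∈ Fin n, and all i ≠ j in Fin n the product of directional derivatives (fderiv ℝ h s (Pi.single i 1) k) * (fderiv ℝ h s (Pi.single j 1) k) = 0. Then there exist a permutation σ of Fin n and functions φ_k : ℝ → ℝ, each differentiable with nowhere-vanishing derivative (hence injective), such that h(s) k = φ_k (s (σ k)) for every s and k. -/

import Mathlib

/-- A continuous nowhere-vanishing real function on a preconnected space that is
positive somewhere is positive everywhere. -/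
lemma aux_sign_const {X : Type*} [TopologicalSpace X] [PreconnectedSpace X]
    (f : X → ℝ) (hc : Continuous f) (h0 : ∀ x, f x ≠ 0) {x0 : X} (hp : 0 < f x0) :
    ∀ x, 0 < f x := by
  have heq : {x | 0 < f x} = (f ⁻¹' Set.Iio 0)ᶜ := by
    ext x
    simp only [Set.mem_setOf_eq, Set.mem_compl_iff, Set.mem_preimage, Set.mem_Iio, not_lt]
    exact ⟨fun h => h.le, fun h => lt_of_le_of_ne h (Ne.symm (h0 x))⟩
  have hcl : IsClopen {x | 0 < f x} := by
    constructor
    · rw [heq]; exact (isOpen_Iio.preimage hc).isClosed_compl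
    · exact isOpen_Ioi.preimage hc
  have := hcl.eq_univ ⟨x0, hp⟩
  intro x
  have : x ∈ {x | 0 < f x} := this ▸ Set.mem_univ x
  exact this

/-- A real function with continuous, nowhere-vanishing derivative is injective. -/
lemma aux_inj (f : ℝ → ℝ) (hd : Continuous (deriv f)) (h0 : ∀ x, deriv f x ≠ 0) :
    Function.Injective f := by
  rcases (h0 0).lt_or_gt with hneg | hpos
  · have := aux_sign_const (fun x => -(deriv f x)) hd.neg
      (fun x => neg_ne_zero.mpr (h0 x)) (x0 := 0) (neg_pos.mpr hneg)
    exact (strictAnti_of_deriv_neg (fun x => neg_pos.mp (this x))).injective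
  · exact (strictMono_of_deriv_pos (aux_sign_const (deriv f) hd h0 hpos)).injective

/-- The concluding step of the proof of Theorem 1: a `C¹` map whose Jacobian
is everywhere invertible and whose rows each contain at most one nonzero
entry (the cross products of partial derivatives of every component vanish)
is a fixed coordinate permutation followed by component-wise invertible
scalar functions. -/
theorem jacobian_generalized_permutation_implies_componentwise
    (n : ℕ) (hn : 1 ≤ n)
    (h : (Fin n → ℝ) → (Fin n → ℝ))
    (hC1 : ContDiff ℝ 1 h)
    (hinv : ∀ s : Fin n → ℝ, Function.Bijective (fderiv ℝ h s))
    (hcross : ∀ (s : Fin n → ℝ) (k i j : Fin n), i ≠ j →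
      fderiv ℝ h s (Pi.single i 1) k * fderiv ℝ h s (Pi.single j 1) k = 0) :
    ∃ (σ : Equiv.Perm (Fin n)) (φ : Fin n → ℝ → ℝ),
      (∀ k : Fin n, Differentiable ℝ (φ k)) ∧
      (∀ (k : Fin n) (x : ℝ), deriv (φ k) x ≠ 0) ∧
      (∀ k : Fin n, Function.Injective (φ k)) ∧
      ∀ (s : Fin n → ℝ) (k : Fin n), h s k = φ k (s (σ k)) := by
  classical
  have hdiff : Differentiable ℝ h := hC1.differentiable one_ne_zero
  -- decomposition of the derivative into partial derivatives
  have hsum : ∀ (s v : Fin n → ℝ) (k : Fin n),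
      fderiv ℝ h s v k = ∑ j, v j * fderiv ℝ h s (Pi.single j 1) k := by
    intro s v k
    have hv : v = ∑ j, v j • (Pi.single j 1 : Fin n → ℝ) := by
      conv_lhs => rw [← Finset.univ_sum_single v]
      congr 1; funext j; rw [← Pi.single_smul, smul_eq_mul, mul_one]
    conv_lhs => rw [hv]
    rw [map_sum]
    simp [Finset.sum_apply]
  -- continuity of the Jacobian entries
  have hce : ∀ (k j : Fin n), Continuous fun s => fderiv ℝ h s (Pi.single j 1) k := by
    intro k j
    exact (continuous_apply k).comp ((hC1.continuous_fderiv one_ne_zero).clm_apply continuous_const)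
  -- every row has a nonzero entry
  have hrow : ∀ (s : Fin n → ℝ) (k : Fin n),
      ∃ j, fderiv ℝ h s (Pi.single j 1) k ≠ 0 := by
    intro s k
    by_contra hc
    push_neg at hc
    obtain ⟨v, hv⟩ := (hinv s).2 (Pi.single k 1)
    have h1 := hsum s v k
    rw [hv] at h1
    simp [hc] at h1
  -- the column of the unique nonzero entry of row `k` at the base point `0`
  set g : Fin n → Fin n := fun k => (hrow 0 k).choose with hg_def
  have hg : ∀ k, fderiv ℝ h 0 (Pi.single (g k) 1) k ≠ 0 := fun k => (hrow 0 k).choose_spec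
  -- that entry is nonzero at every point (clopen argument)
  have hA : ∀ (k : Fin n) (s : Fin n → ℝ), fderiv ℝ h s (Pi.single (g k) 1) k ≠ 0 := by
    intro k
    have hcl : IsClopen {s : Fin n → ℝ | fderiv ℝ h s (Pi.single (g k) 1) k ≠ 0} := by
      constructor
      · -- closed : the complement is open
        rw [← isOpen_compl_iff]
        rw [isOpen_iff_mem_nhds]
        intro s hs
        simp only [Set.mem_compl_iff, Set.mem_setOf_eq, not_not] at hs
        obtain ⟨j, hj⟩ := hrow s k
        have hjne : j ≠ g k := by
          intro hje; rw [hje] at hj; exact hj hs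
        have hopen : IsOpen {s' : Fin n → ℝ | fderiv ℝ h s' (Pi.single j 1) k ≠ 0} :=
          isOpen_compl_singleton.preimage (hce k j)
        have hmem : s ∈ {s' : Fin n → ℝ | fderiv ℝ h s' (Pi.single j 1) k ≠ 0} := hj
        refine Filter.mem_of_superset (hopen.mem_nhds hmem) ?_
        intro s' hs'
        simp only [Set.mem_setOf_eq] at hs'
        simp only [Set.mem_compl_iff, Set.mem_setOf_eq, not_not]
        have := hcross s' k j (g k) hjne
        exact (mul_eq_zero.mp this).resolve_left hs'
      · exact isOpen_compl_singleton.preimage (hce k (g k))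
    have := hcl.eq_univ ⟨0, hg k⟩
    intro s
    have hmem : s ∈ {s : Fin n → ℝ | fderiv ℝ h s (Pi.single (g k) 1) k ≠ 0} :=
      this ▸ Set.mem_univ s
    exact hmem
  -- all other entries vanish everywhere
  have hzero : ∀ (s : Fin n → ℝ) (k j : Fin n), j ≠ g k →
      fderiv ℝ h s (Pi.single j 1) k = 0 := by
    intro s k j hj
    have := hcross s k j (g k) hj
    exact (mul_eq_zero.mp this).resolve_right (hA k s)
  -- g is injective
  have ginj : Function.Injective g := by
    intro k k' hkk'
    by_contra hne
    obtain ⟨v, hv⟩ := (hinv 0).2 (Pi.single k 1)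
    have h1 : fderiv ℝ h 0 v k = 1 := by rw [hv]; simp
    have h2 : fderiv ℝ h 0 v k' = 0 := by rw [hv]; simp [Ne.symm hne]
    rw [hsum] at h1 h2
    rw [Fintype.sum_eq_single (g k) (fun j hj => by rw [hzero 0 k j hj, mul_zero])] at h1
    rw [Fintype.sum_eq_single (g k') (fun j hj => by rw [hzero 0 k' j hj, mul_zero])] at h2
    have hv0 : v (g k') = 0 := by
      rcases mul_eq_zero.mp h2 with h' | h'
      · exact h'
      · exact absurd h' (hA k' 0)
    rw [← hkk'] at hv0
    rw [hv0, zero_mul] at h1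
    exact zero_ne_one h1
  -- component k depends only on coordinate g k
  have hdep : ∀ (k : Fin n) (s s' : Fin n → ℝ), s (g k) = s' (g k) → h s k = h s' k := by
    intro k s s' hss
    set v : Fin n → ℝ := s' - s with hv_def
    have hv0 : v (g k) = 0 := by simp [hv_def, hss]
    set p : ℝ → (Fin n → ℝ) := fun t => s + t • v with hp_def
    have hp : ∀ t, HasDerivAt p v t := by
      intro t
      have := ((hasDerivAt_id t).smul_const v).const_add s
      simpa only [one_smul, id] using this
    have hψ : ∀ t, HasDerivAt (fun t => h (p t) k) 0 t := by
      intro t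
      have h1 : HasDerivAt (fun t => h (p t)) (fderiv ℝ h (p t) v) t :=
        (hdiff (p t)).hasFDerivAt.comp_hasDerivAt t (hp t)
      have h2 := (ContinuousLinearMap.proj (R := ℝ) (φ := fun _ : Fin n => ℝ)
        k).hasFDerivAt.comp_hasDerivAt t h1
      have heval : fderiv ℝ h (p t) v k = 0 := by
        rw [hsum]
        rw [Fintype.sum_eq_single (g k) (fun j hj => by rw [hzero (p t) k j hj, mul_zero])]
        rw [hv0, zero_mul]
      have h2' : HasDerivAt (fun t => h (p t) k) (fderiv ℝ h (p t) v k) t := h2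
      rw [heval] at h2'
      exact h2' 
    have hconst := is_const_of_deriv_eq_zero (f := fun t => h (p t) k)
      (fun t => (hψ t).differentiableAt) (fun t => (hψ t).deriv) 0 1
    have hp0 : p 0 = s := by simp [hp_def]
    have hp1 : p 1 = s' := by simp [hp_def, hv_def]
    rw [hp0, hp1] at hconst
    exact hconst
  -- derivative of the scalar functions
  have hφd : ∀ (k : Fin n) (x : ℝ), HasDerivAt (fun x => h (Pi.single (g k) x) k)
      (fderiv ℝ h (Pi.single (g k) x) (Pi.single (g k) 1) k) x := by
    intro k x
    have hq' : HasDerivAt (fun y : ℝ => (Pi.single (g k) y : Fin n → ℝ))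
        (Pi.single (g k) 1) x := by
      have := (hasDerivAt_id x).smul_const (Pi.single (g k) 1 : Fin n → ℝ)
      simp only [one_smul] at this
      convert this using 1
      · rfl
      · rfl
      · rfl
      funext y j
      rcases eq_or_ne j (g k) with hj | hj <;> simp [Pi.single_apply, hj]
    have h1 : HasDerivAt (fun y : ℝ => h (Pi.single (g k) y))
        (fderiv ℝ h (Pi.single (g k) x) (Pi.single (g k) 1)) x :=
      (hdiff _).hasFDerivAt.comp_hasDerivAt x hq'
    have h2 := (ContinuousLinearMap.proj (R := ℝ) (φ := fun _ : Fin n => ℝ)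
      k).hasFDerivAt.comp_hasDerivAt x h1
    exact h2
  have hφderiv : ∀ (k : Fin n) (x : ℝ), deriv (fun x => h (Pi.single (g k) x) k) x =
      fderiv ℝ h (Pi.single (g k) x) (Pi.single (g k) 1) k :=
    fun k x => (hφd k x).deriv
  refine ⟨Equiv.ofBijective g (Finite.injective_iff_bijective.mp ginj),
    fun k x => h (Pi.single (g k) x) k, ?_, ?_, ?_, ?_⟩
  · exact fun k x => (hφd k x).differentiableAt
  · intro k x
    rw [hφderiv k x]
    exact hA k _
  · intro k
    refine aux_inj _ ?_ (fun x => by rw [hφderiv k x]; exact hA k _)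
    have heq : deriv (fun x => h (Pi.single (g k) x) k) = fun x =>
        fderiv ℝ h (Pi.single (g k) x) (Pi.single (g k) 1) k := funext (hφderiv k)
    rw [heq]
    apply (hce k (g k)).comp
    exact continuous_const.update (g k) continuous_id
  · intro s k
    have heq := hdep k s (Pi.single (g k) (s (g k))) (by simp)
    rw [heq]
    rfl
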